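/- arXiv:2102.02990 — 2 statements merged into one kernel-verified Lean document; each statement's English description precedes it below -/
import Mathlib

section
/- For every star expression e over an action set A, the projection function π restricts to a functional bisimulation from the induced chart of the 1-chart interpretation C1(e) to the chart interpretation C(e); in particular ind(C1(e)) and C(e) are bisimilar. -/
universe u v w

/-- Star expressions over a set `A` of actions. -/
inductive StExp (A : Type u) : Type u
  | zero : StExp A
  | one : StExp A
  | act : A → StExp A
  | add : StExp A → StExp A → StExp A
  | mul : StExp A → StExp A → StExp A
  | star : StExp A → StExp A

namespace StExp

variable {A : Type u}

/-- Immediate termination in Milner's TSS `T(A)`. -/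
inductive Term : StExp A → Prop
  | one : Term StExp.one
  | addL {e₁ e₂ : StExp A} : Term e₁ → Term (StExp.add e₁ e₂)
  | addR {e₁ e₂ : StExp A} : Term e₂ → Term (StExp.add e₁ e₂)
  | mul {e₁ e₂ : StExp A} : Term e₁ → Term e₂ → Term (StExp.mul e₁ e₂)
  | star {e : StExp A} : Term (StExp.star e)

/-- Transitions in Milner's TSS `T(A)`. -/
inductive Step : StExp A → A → StExp A → Prop
  | act {a : A} : Step (StExp.act a) a StExp.one
  | addL {e₁ e₂ e' : StExp A} {a : A} : Step e₁ a e' → Step (StExp.add e₁ e₂) a e'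
  | addR {e₁ e₂ e' : StExp A} {a : A} : Step e₂ a e' → Step (StExp.add e₁ e₂) a e'
  | mulL {e₁ e₂ e₁' : StExp A} {a : A} :
      Step e₁ a e₁' → Step (StExp.mul e₁ e₂) a (StExp.mul e₁' e₂)
  | mulR {e₁ e₂ e₂' : StExp A} {a : A} :
      Term e₁ → Step e₂ a e₂' → Step (StExp.mul e₁ e₂) a e₂'
  | star {e e' : StExp A} {a : A} :
      Step e a e' → Step (StExp.star e) a (StExp.mul e' (StExp.star e))

/-- (Syntactic) star height. -/
def height : StExp A → ℕ
  | .zero => 0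
  | .one => 0
  | .act _ => 0
  | .add e₁ e₂ => max e₁.height e₂.height
  | .mul e₁ e₂ => max e₁.height e₂.height
  | .star e => e.height + 1

end StExp

/-- Stacked star expressions: `E ::= e | E·e | E * e*`. -/
inductive SExp (A : Type u) : Type u
  | up : StExp A → SExp A
  | pr : SExp A → StExp A → SExp A
  | st : SExp A → StExp A → SExp A

namespace SExp

variable {A : Type u}

/-- Projection to star expressions, interpreting `*` as `·`. -/
def proj : SExp A → StExp A
  | .up e => e
  | .pr E e => StExp.mul E.proj e
  | .st E e => StExp.mul E.proj (StExp.star e)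

/-- `E` is a star expression (contains no stacked product `*`). -/
def IsStExp : SExp A → Prop
  | .up _ => True
  | .pr E _ => IsStExp E
  | .st _ _ => False

/-- Star expressions that are not products (canonical arguments of `up`). -/
def UpOk : StExp A → Prop
  | .mul _ _ => False
  | _ => True

/-- Canonical stacked star expressions: products of star expressions are
represented by `pr` rather than by `up` applied to `StExp.mul`. -/
def Canonical : SExp A → Prop
  | .up e => UpOk e
  | .pr E _ => Canonical E
  | .st E _ => Canonical E

/-- Canonical embedding of star expressions into stacked star expressions. -/
def flatUp : StExp A → SExp A
  | .mul e₁ e₂ => SExp.pr (flatUp e₁) e₂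
  | e => SExp.up e

/-- Immediate termination for stacked star expressions (TSS `T̲^(*)(A)`). -/
inductive STerm : SExp A → Prop
  | up {e : StExp A} : StExp.Term e → STerm (SExp.up e)
  | pr {E : SExp A} {e : StExp A} : STerm E → StExp.Term e → STerm (SExp.pr E e)

/-- Transitions of the TSS `T̲^(*)(A)`; labels in `Option A`, where `none`
is the empty-step label `1`. -/
inductive SStep : SExp A → Option A → SExp A → Prop
  | act {a : A} : SStep (SExp.up (StExp.act a)) (some a) (SExp.up StExp.one)
  | addL {e₁ e₂ : StExp A} {a : A} {E' : SExp A} :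
      SStep (SExp.up e₁) (some a) E' → SStep (SExp.up (StExp.add e₁ e₂)) (some a) E'
  | addR {e₁ e₂ : StExp A} {a : A} {E' : SExp A} :
      SStep (SExp.up e₂) (some a) E' → SStep (SExp.up (StExp.add e₁ e₂)) (some a) E'
  | upMulL {e₁ e₂ : StExp A} {l : Option A} {E₁' : SExp A} :
      SStep (SExp.up e₁) l E₁' → SStep (SExp.up (StExp.mul e₁ e₂)) l (SExp.pr E₁' e₂)
  | upMulR {e₁ e₂ : StExp A} {a : A} {E₂' : SExp A} :
      StExp.Term e₁ → SStep (SExp.up e₂) (some a) E₂' →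
      SStep (SExp.up (StExp.mul e₁ e₂)) (some a) E₂'
  | upStar {e : StExp A} {a : A} {E' : SExp A} :
      SStep (SExp.up e) (some a) E' →
      SStep (SExp.up (StExp.star e)) (some a) (SExp.st E' e)
  | prL {E₁ E₁' : SExp A} {e₂ : StExp A} {l : Option A} :
      SStep E₁ l E₁' → SStep (SExp.pr E₁ e₂) l (SExp.pr E₁' e₂)
  | prR {E₁ E₂' : SExp A} {e₂ : StExp A} {a : A} :
      STerm E₁ → SStep (SExp.up e₂) (some a) E₂' → SStep (SExp.pr E₁ e₂) (some a) E₂'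
  | stL {E₁ E₁' : SExp A} {e₂ : StExp A} {l : Option A} :
      SStep E₁ l E₁' → SStep (SExp.st E₁ e₂) l (SExp.st E₁' e₂)
  | stOne {E₁ : SExp A} {e₂ : StExp A} :
      STerm E₁ → SStep (SExp.st E₁ e₂) none (SExp.up (StExp.star e₂))

/-- `1`-transition. -/
def OneStep (E F : SExp A) : Prop := SStep E none F

/-- Transition with an arbitrary label in `A ∪ {1}`. -/
def AStep (E F : SExp A) : Prop := ∃ l, SStep E l F

/-- Induced (proper) transition `E ⇒a E'`: a sequence of `1`-transitions
followed by an `a`-transition. -/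
def IStep (E : SExp A) (a : A) (E' : SExp A) : Prop :=
  ∃ F, Relation.ReflTransGen OneStep E F ∧ SStep F (some a) E'

/-- Induced termination `E ↓(1)`: a sequence of `1`-transitions ending in a
terminating expression. -/
def ITerm (E : SExp A) : Prop :=
  ∃ F, Relation.ReflTransGen OneStep E F ∧ STerm F

/-- `E` is normed: a path to an expression with immediate termination. -/
def Normed (E : SExp A) : Prop :=
  ∃ F, Relation.ReflTransGen AStep E F ∧ STerm F

/-- `E` is normed⁺: a nonempty sequence of induced transitions to an
expression with induced termination. -/
def NormedP (E : SExp A) : Prop :=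
  ∃ F, Relation.TransGen (fun X Y => ∃ a : A, IStep X a Y) E F ∧ ITerm F

/-- Induced termination as derived in the extension `T̲ind^(*)(A)`. -/
inductive IndTerm : SExp A → Prop
  | base {E : SExp A} : STerm E → IndTerm E
  | step {E F : SExp A} : SStep E none F → IndTerm F → IndTerm E

/-- Induced transitions as derived in the extension `T̲ind^(*)(A)`. -/
inductive IndStep : SExp A → A → SExp A → Prop
  | base {E E' : SExp A} {a : A} : SStep E (some a) E' → IndStep E a E'
  | step {E F E' : SExp A} {a : A} : SStep E none F → IndStep F a E' → IndStep E a E'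

/-- Marked transitions of the TSS `T̲̂^(*)(A)`: marking label `0` means a body
(`bo`) transition, `n ≥ 1` a loop-entry transition of level `n`. -/
inductive MStep : SExp A → Option A × ℕ → SExp A → Prop
  | act {a : A} : MStep (SExp.up (StExp.act a)) (some a, 0) (SExp.up StExp.one)
  | addL {e₁ e₂ : StExp A} {a : A} {n : ℕ} {E' : SExp A} :
      MStep (SExp.up e₁) (some a, n) E' → MStep (SExp.up (StExp.add e₁ e₂)) (some a, 0) E'
  | addR {e₁ e₂ : StExp A} {a : A} {n : ℕ} {E' : SExp A} :
      MStep (SExp.up e₂) (some a, n) E' → MStep (SExp.up (StExp.add e₁ e₂)) (some a, 0) E'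
  | upMulL {e₁ e₂ : StExp A} {l : Option A × ℕ} {E₁' : SExp A} :
      MStep (SExp.up e₁) l E₁' → MStep (SExp.up (StExp.mul e₁ e₂)) l (SExp.pr E₁' e₂)
  | upMulR {e₁ e₂ : StExp A} {a : A} {n : ℕ} {E₂' : SExp A} :
      StExp.Term e₁ → MStep (SExp.up e₂) (some a, n) E₂' →
      MStep (SExp.up (StExp.mul e₁ e₂)) (some a, 0) E₂'
  | upStarP {e : StExp A} {a : A} {n : ℕ} {E' : SExp A} :
      NormedP (SExp.up e) → MStep (SExp.up e) (some a, n) E' →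
      MStep (SExp.up (StExp.star e)) (some a, e.height + 1) (SExp.st E' e)
  | upStarN {e : StExp A} {a : A} {n : ℕ} {E' : SExp A} :
      ¬ NormedP (SExp.up e) → MStep (SExp.up e) (some a, n) E' →
      MStep (SExp.up (StExp.star e)) (some a, 0) (SExp.st E' e)
  | prL {E₁ E₁' : SExp A} {e₂ : StExp A} {l : Option A × ℕ} :
      MStep E₁ l E₁' → MStep (SExp.pr E₁ e₂) l (SExp.pr E₁' e₂)
  | prR {E₁ E₂' : SExp A} {e₂ : StExp A} {a : A} {n : ℕ} :
      STerm E₁ → MStep (SExp.up e₂) (some a, n) E₂' →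
      MStep (SExp.pr E₁ e₂) (some a, 0) E₂'
  | stL {E₁ E₁' : SExp A} {e₂ : StExp A} {l : Option A × ℕ} :
      MStep E₁ l E₁' → MStep (SExp.st E₁ e₂) l (SExp.st E₁' e₂)
  | stOne {E₁ : SExp A} {e₂ : StExp A} :
      STerm E₁ → MStep (SExp.st E₁ e₂) (none, 0) (SExp.up (StExp.star e₂))

/-- Body transition `→bo`. -/
def BStep (E F : SExp A) : Prop := ∃ l : Option A, MStep E (l, 0) F

/-- Star height of stacked star expressions. -/
def heightS : SExp A → ℕ
  | .up e => e.height
  | .pr E e => max E.heightS e.height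
  | .st E e => max E.heightS (e.height + 1)

end SExp

/-- Applicative contexts of stacked star expressions. -/
inductive AppCtx (A : Type u) : Type u
  | hole : AppCtx A
  | pr : AppCtx A → StExp A → AppCtx A
  | st : AppCtx A → StExp A → AppCtx A

/-- Filling the hole of an applicative context. -/
def AppCtx.fill {A : Type u} : AppCtx A → SExp A → SExp A
  | .hole, E => E
  | .pr C e, E => SExp.pr (C.fill E) e
  | .st C e, E => SExp.st (C.fill E) e

/-- A labeled transition system with termination. -/
structure LTS (S : Type u) (L : Type v) where
  step : S → L → S → Prop
  term : S → Prop

/-- Bisimulation between two LTSs with termination. -/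
def IsBisimulation {S₁ : Type u} {S₂ : Type v} {L : Type w}
    (M₁ : LTS S₁ L) (M₂ : LTS S₂ L) (B : S₁ → S₂ → Prop) : Prop :=
  (∃ s₁ s₂, B s₁ s₂) ∧
  ∀ s₁ s₂, B s₁ s₂ →
    ((∀ a s₁', M₁.step s₁ a s₁' → ∃ s₂', M₂.step s₂ a s₂' ∧ B s₁' s₂') ∧
     (∀ a s₂', M₂.step s₂ a s₂' → ∃ s₁', M₁.step s₁ a s₁' ∧ B s₁' s₂') ∧
     (M₁.term s₁ ↔ M₂.term s₂))

/-- The star expressions LTS `L(StExp(A))`. -/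
def stexpLTS (A : Type u) : LTS (StExp A) A := ⟨StExp.Step, StExp.Term⟩

/-- The induced LTS of the stacked star expressions 1-LTS `L1(StExp^(*)(A))`. -/
def indSExpLTS (A : Type u) : LTS (SExp A) A := ⟨SExp.IStep, SExp.ITerm⟩

/-- A (rooted) chart. -/
structure Chart (V : Type u) (L : Type v) where
  verts : Set V
  start : V
  step : V → L → V → Prop
  term : V → Prop

/-- Bisimulation between two charts: a bisimulation between the underlying
LTSs that relates the start vertices. -/
def IsChartBisim {V₁ : Type u} {V₂ : Type v} {L : Type w}
    (C₁ : Chart V₁ L) (C₂ : Chart V₂ L) (B : V₁ → V₂ → Prop) : Prop :=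
  (∀ x y, B x y → x ∈ C₁.verts ∧ y ∈ C₂.verts) ∧
  B C₁.start C₂.start ∧
  ∀ x y, B x y →
    ((∀ a x', C₁.step x a x' → ∃ y', C₂.step y a y' ∧ B x' y') ∧
     (∀ a y', C₂.step y a y' → ∃ x', C₁.step x a x' ∧ B x' y') ∧
     (C₁.term x ↔ C₂.term y))

def ChartBisimilar {V₁ : Type u} {V₂ : Type v} {L : Type w}
    (C₁ : Chart V₁ L) (C₂ : Chart V₂ L) : Prop :=
  ∃ B, IsChartBisim C₁ C₂ B

/-- Star expressions reachable from `e` in Milner's LTS. -/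
def MReach {A : Type u} (e : StExp A) : Set (StExp A) :=
  {f | Relation.ReflTransGen (fun x y => ∃ a, StExp.Step x a y) e f}

/-- The chart interpretation `C(e)` of a star expression. -/
def chartInt {A : Type u} (e : StExp A) : Chart (StExp A) A where
  verts := MReach e
  start := e
  step x a y := x ∈ MReach e ∧ StExp.Step x a y
  term x := x ∈ MReach e ∧ StExp.Term x

/-- Stacked star expressions reachable from (the canonical representation of)
`e` in the 1-LTS. -/
def SReach {A : Type u} (e : StExp A) : Set (SExp A) :=
  {F | Relation.ReflTransGen SExp.AStep (SExp.flatUp e) F}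

/-- The 1-chart interpretation `C1(e)` of a star expression. -/
def oneChartInt {A : Type u} (e : StExp A) : Chart (SExp A) (Option A) where
  verts := SReach e
  start := SExp.flatUp e
  step x l y := x ∈ SReach e ∧ SExp.SStep x l y
  term x := x ∈ SReach e ∧ SExp.STerm x

/-- The entry/body-labeled 1-chart interpretation `Ĉ1(e)`. -/
def markedOneChartInt {A : Type u} (e : StExp A) : Chart (SExp A) (Option A × ℕ) where
  verts := SReach e
  start := SExp.flatUp e
  step x l y := x ∈ SReach e ∧ SExp.MStep x l y
  term x := x ∈ SReach e ∧ SExp.STerm x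

/-- The induced chart of a 1-chart: induced transitions and induced
termination. -/
def indChart {V : Type u} {A : Type v} (C : Chart V (Option A)) : Chart V A where
  verts := C.verts
  start := C.start
  step x a y := ∃ u, Relation.ReflTransGen (fun s t => C.step s none t) x u ∧ C.step u (some a) y
  term x := ∃ u, Relation.ReflTransGen (fun s t => C.step s none t) x u ∧ C.term u

/-- An infinite path from the start vertex of a chart. -/
def IsInfPathFrom {V : Type u} {L : Type v} (C : Chart V L) (p : ℕ → V) : Prop :=
  p 0 = C.start ∧ ∀ i, ∃ l, C.step (p i) l (p (i + 1))

/-- Loop chart: (L1) an infinite path from the start vertex exists, (L2) every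
infinite path from the start vertex returns to it after a positive number of
transitions, (L3) only the start vertex may terminate. -/
def IsLoopChart {V : Type u} {L : Type v} (C : Chart V L) : Prop :=
  (∃ p, IsInfPathFrom C p) ∧
  (∀ p, IsInfPathFrom C p → ∃ k, 0 < k ∧ p k = C.start) ∧
  (∀ w ∈ C.verts, C.term w → w = C.start)

namespace LLEE

variable {S : Type u} {L : Type v}

/-- Body transition of an entry/body-labeling. -/
def Body (step : S → L × ℕ → S → Prop) (x y : S) : Prop := ∃ l, step x (l, 0) y

/-- Entry transition of level `n` of an entry/body-labeling. -/
def Entry (step : S → L × ℕ → S → Prop) (n : ℕ) (x y : S) : Prop := ∃ l, step x (l, n) y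

/-- Vertices of the induced subchart at `(v, n)`: on paths that start with an
`→[n]` transition from `v`, continue with body transitions, and halt upon
revisiting `v`. -/
def loopVerts (step : S → L × ℕ → S → Prop) (v : S) (n : ℕ) : Set S :=
  insert v {w | ∃ u, Entry step n v u ∧
    Relation.ReflTransGen (fun x y => Body step x y ∧ x ≠ v) u w}

/-- The induced subchart at `(v, n)`. -/
def subchartAt (step : S → L × ℕ → S → Prop) (term : S → Prop) (v : S) (n : ℕ) :
    Chart S (L × ℕ) where
  verts := loopVerts step v n
  start := v
  step x l y :=
    (x = v ∧ l.2 = n ∧ step x l y) ∨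
    (x ∈ loopVerts step v n ∧ x ≠ v ∧ l.2 = 0 ∧ step x l y)
  term x := x ∈ loopVerts step v n ∧ term x

/-- LLEE-witness conditions (W1)–(W3) for an entry/body-labeled transition
system with transitions `step` and termination `term`. -/
def IsWitness (step : S → L × ℕ → S → Prop) (term : S → Prop) : Prop :=
  (¬ ∃ p : ℕ → S, ∀ i, Body step (p i) (p (i + 1))) ∧
  (∀ v n, 0 < n → (∃ w, Entry step n v w) → IsLoopChart (subchartAt step term v n)) ∧
  (∀ v n, 0 < n → (∃ w, Entry step n v w) →
    ∀ t, t ∈ loopVerts step v n → t ≠ v → ∀ m t', 0 < m → Entry step m t t' → m < n)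

end LLEE

namespace LEE

variable {V : Type u} {L : Type v}

/-- Vertices of the subchart generated from `v` by a set `U` of transitions
from `v`: paths start with a transition in `U` and continue (with arbitrary
transitions) until `v` is reached again. -/
def genVerts (C : Chart V L) (v : V) (U : Set (V × L × V)) : Set V :=
  insert v {w | ∃ u, (∃ l, (v, l, u) ∈ U) ∧
    Relation.ReflTransGen (fun x y => (∃ l, C.step x l y) ∧ x ≠ v) u w}

/-- The subchart generated from `v` by the transitions in `U`. -/
def genSubchart (C : Chart V L) (v : V) (U : Set (V × L × V)) : Chart V L where
  verts := genVerts C v U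
  start := v
  step x l y :=
    (x = v ∧ (v, l, y) ∈ U) ∨
    (x ∈ genVerts C v U ∧ x ≠ v ∧ C.step x l y)
  term x := x ∈ genVerts C v U ∧ C.term x

/-- `U` determines a loop subchart of `C` rooted at `v`. -/
def IsLoopSubchart (C : Chart V L) (v : V) (U : Set (V × L × V)) : Prop :=
  v ∈ C.verts ∧ U.Nonempty ∧
  (∀ t ∈ U, t.1 = v ∧ C.step t.1 t.2.1 t.2.2) ∧
  IsLoopChart (genSubchart C v U)

/-- Elimination of the loop-entry transitions in `U`, followed by removal of
all vertices and transitions that become unreachable. -/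
def elim (C : Chart V L) (U : Set (V × L × V)) : Chart V L :=
  let step' : V → L → V → Prop := fun x l y => C.step x l y ∧ (x, l, y) ∉ U
  let R : Set V := {w | Relation.ReflTransGen (fun x y => ∃ l, step' x l y) C.start w}
  { verts := C.verts ∩ R
    start := C.start
    step := fun x l y => step' x l y ∧ x ∈ R ∧ y ∈ R
    term := fun x => C.term x ∧ x ∈ R }

/-- One step of the loop elimination procedure. -/
def ElimStep (C C' : Chart V L) : Prop :=
  ∃ v U, IsLoopSubchart C v U ∧ C' = elim C U

/-- The chart has an infinite path. -/
def HasInfPath (C : Chart V L) : Prop :=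
  ∃ p : ℕ → V, p 0 ∈ C.verts ∧ ∀ i, ∃ l, C.step (p i) l (p (i + 1))

/-- The loop existence and elimination property LEE: repeated elimination of
loop subcharts results in a chart without an infinite path. -/
def SatisfiesLEE (C : Chart V L) : Prop :=
  ∃ C', Relation.ReflTransGen ElimStep C C' ∧ ¬ HasInfPath C'

end LEE

/-- A maximal path of body transitions from `X` in the entry/body-labeled
1-LTS: finite (of length `len`) or infinite (`len = ⊤`), and if finite then
not extensible by any further body transition. -/
structure BoPath (A : Type u) (X : SExp A) where
  len : ℕ∞
  f : ℕ → SExp A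
  head : f 0 = X
  steps : ∀ i : ℕ, (i : ℕ∞) < len → SExp.BStep (f i) (f (i + 1))
  maximal : ∀ n : ℕ, len = (n : ℕ∞) → ∀ Y, ¬ SExp.BStep (f n) Y

/-- Canonical stacked star expressions (the states of the stacked star
expressions 1-LTS `L1(StExp^(*)(A))`). -/
def CSExp (A : Type u) : Type u := {E : SExp A // SExp.Canonical E}

section Aux

variable {A : Type u}

open SExp StExp Relation

lemma proj_flatUp (e : StExp A) : (SExp.flatUp e).proj = e := by
  induction e with
  | mul e₁ e₂ ih₁ ih₂ => simp [SExp.flatUp, SExp.proj, ih₁]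
  | _ => rfl

lemma sterm_proj {E : SExp A} (h : SExp.STerm E) : StExp.Term E.proj := by
  induction h with
  | up h => exact h
  | pr _ h ih => exact StExp.Term.mul ih h

/-- Combined forward lemma: labeled transitions project to `Step`; `1`-transitions
back-propagate steps and termination. -/
lemma sstep_proj {E E' : SExp A} {l : Option A} (h : SExp.SStep E l E') :
    (∀ a, l = some a → StExp.Step E.proj a E'.proj) ∧
    (l = none →
      (∀ a g, StExp.Step E'.proj a g → StExp.Step E.proj a g) ∧
      (StExp.Term E'.proj → StExp.Term E.proj)) := by
  induction h with
  | act =>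
      exact ⟨fun a ha => by cases ha; exact StExp.Step.act, fun h => by cases h⟩
  | addL h ih =>
      exact ⟨fun a ha => by cases ha; exact StExp.Step.addL (ih.1 _ rfl),
        fun h => by cases h⟩
  | addR h ih =>
      exact ⟨fun a ha => by cases ha; exact StExp.Step.addR (ih.1 _ rfl),
        fun h => by cases h⟩
  | upMulL h ih =>
      refine ⟨fun a ha => StExp.Step.mulL (ih.1 a ha), fun hn => ?_⟩
      obtain ⟨ihS, ihT⟩ := ih.2 hn
      constructor
      · intro a g hg
        cases hg with
        | mulL h₁ => exact StExp.Step.mulL (ihS _ _ h₁)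
        | mulR ht h₂ => exact StExp.Step.mulR (ihT ht) h₂
      · intro ht
        cases ht with
        | mul h₁ h₂ => exact StExp.Term.mul (ihT h₁) h₂
  | upMulR ht h ih =>
      exact ⟨fun a ha => by cases ha; exact StExp.Step.mulR ht (ih.1 _ rfl),
        fun h => by cases h⟩
  | upStar h ih =>
      exact ⟨fun a ha => by cases ha; exact StExp.Step.star (ih.1 _ rfl),
        fun h => by cases h⟩
  | prL h ih =>
      refine ⟨fun a ha => StExp.Step.mulL (ih.1 a ha), fun hn => ?_⟩
      obtain ⟨ihS, ihT⟩ := ih.2 hn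
      constructor
      · intro a g hg
        cases hg with
        | mulL h₁ => exact StExp.Step.mulL (ihS _ _ h₁)
        | mulR ht h₂ => exact StExp.Step.mulR (ihT ht) h₂
      · intro ht
        cases ht with
        | mul h₁ h₂ => exact StExp.Term.mul (ihT h₁) h₂
  | prR ht h ih =>
      refine ⟨fun a ha => ?_, fun h => by cases h⟩
      cases ha
      exact StExp.Step.mulR (sterm_proj ht) (ih.1 _ rfl)
  | stL h ih =>
      refine ⟨fun a ha => StExp.Step.mulL (ih.1 a ha), fun hn => ?_⟩
      obtain ⟨ihS, ihT⟩ := ih.2 hn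
      constructor
      · intro a g hg
        cases hg with
        | mulL h₁ => exact StExp.Step.mulL (ihS _ _ h₁)
        | mulR ht h₂ => exact StExp.Step.mulR (ihT ht) h₂
      · intro ht
        cases ht with
        | mul h₁ h₂ => exact StExp.Term.mul (ihT h₁) h₂
  | stOne ht =>
      refine ⟨fun a ha => ?_, fun _ => ?_⟩
      · cases ha
      constructor
      · intro a g hg
        exact StExp.Step.mulR (sterm_proj ht) hg
      · intro _
        exact StExp.Term.mul (sterm_proj ht) StExp.Term.star

/-- Backward lemma for `up`: any `Step` of a star expression lifts to an
`a`-labeled `SStep` of its embedding. -/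
lemma step_lift {e : StExp A} {a : A} {g : StExp A} (h : StExp.Step e a g) :
    ∃ E', SExp.SStep (SExp.up e) (some a) E' ∧ E'.proj = g := by
  induction h with
  | act => exact ⟨SExp.up StExp.one, SExp.SStep.act, rfl⟩
  | addL _ ih =>
      obtain ⟨E', s, hp⟩ := ih
      exact ⟨E', SExp.SStep.addL s, hp⟩
  | addR _ ih =>
      obtain ⟨E', s, hp⟩ := ih
      exact ⟨E', SExp.SStep.addR s, hp⟩
  | mulL _ ih =>
      obtain ⟨E', s, hp⟩ := ih
      exact ⟨SExp.pr E' _, SExp.SStep.upMulL s, by simp [SExp.proj, hp]⟩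
  | mulR ht _ ih =>
      obtain ⟨E', s, hp⟩ := ih
      exact ⟨E', SExp.SStep.upMulR ht s, hp⟩
  | star _ ih =>
      obtain ⟨E', s, hp⟩ := ih
      exact ⟨SExp.st E' _, SExp.SStep.upStar s, by simp [SExp.proj, hp]⟩

lemma rtg_one_pr {E G : SExp A} (h : Relation.ReflTransGen SExp.OneStep E G)
    (e₂ : StExp A) :
    Relation.ReflTransGen SExp.OneStep (SExp.pr E e₂) (SExp.pr G e₂) := by
  induction h with
  | refl => exact Relation.ReflTransGen.refl
  | tail _ hs ih => exact ih.tail (SExp.SStep.prL hs)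

lemma rtg_one_st {E G : SExp A} (h : Relation.ReflTransGen SExp.OneStep E G)
    (e₂ : StExp A) :
    Relation.ReflTransGen SExp.OneStep (SExp.st E e₂) (SExp.st G e₂) := by
  induction h with
  | refl => exact Relation.ReflTransGen.refl
  | tail _ hs ih => exact ih.tail (SExp.SStep.stL hs)

/-- Backward lemma for termination. -/
lemma term_lift {E : SExp A} (h : StExp.Term E.proj) :
    ∃ G, Relation.ReflTransGen SExp.OneStep E G ∧ SExp.STerm G := by
  induction E with
  | up e => exact ⟨SExp.up e, Relation.ReflTransGen.refl, SExp.STerm.up h⟩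
  | pr E₁ e₂ ih =>
      cases h with
      | mul h₁ h₂ =>
          obtain ⟨G₁, r₁, t₁⟩ := ih h₁
          exact ⟨SExp.pr G₁ e₂, rtg_one_pr r₁ e₂, SExp.STerm.pr t₁ h₂⟩
  | st E₁ e₂ ih =>
      cases h with
      | mul h₁ _ =>
          obtain ⟨G₁, r₁, t₁⟩ := ih h₁
          exact ⟨SExp.up (StExp.star e₂),
            (rtg_one_st r₁ e₂).tail (SExp.SStep.stOne t₁),
            SExp.STerm.up StExp.Term.star⟩

/-- Backward lemma for steps: any `Step` of the projection is matched by an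
induced transition. -/
lemma istep_lift {E : SExp A} {a : A} {g : StExp A} (h : StExp.Step E.proj a g) :
    ∃ E', SExp.IStep E a E' ∧ E'.proj = g := by
  induction E generalizing a g with
  | up e =>
      obtain ⟨E', s, hp⟩ := step_lift h
      exact ⟨E', ⟨SExp.up e, Relation.ReflTransGen.refl, s⟩, hp⟩
  | pr E₁ e₂ ih =>
      cases h with
      | mulL h₁ =>
          obtain ⟨E₁', ⟨u, ru, su⟩, hp⟩ := ih h₁
          exact ⟨SExp.pr E₁' e₂, ⟨SExp.pr u e₂, rtg_one_pr ru e₂, SExp.SStep.prL su⟩,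
            by simp [SExp.proj, hp]⟩
      | mulR ht h₂ =>
          obtain ⟨G, rG, tG⟩ := term_lift ht
          obtain ⟨E₂', s, hp⟩ := step_lift h₂
          exact ⟨E₂', ⟨SExp.pr G e₂, rtg_one_pr rG e₂, SExp.SStep.prR tG s⟩, hp⟩
  | st E₁ e₂ ih =>
      cases h with
      | mulL h₁ =>
          obtain ⟨E₁', ⟨u, ru, su⟩, hp⟩ := ih h₁
          exact ⟨SExp.st E₁' e₂, ⟨SExp.st u e₂, rtg_one_st ru e₂, SExp.SStep.stL su⟩,
            by simp [SExp.proj, hp]⟩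
      | mulR ht hs =>
          obtain ⟨G, rG, tG⟩ := term_lift ht
          obtain ⟨E', s, hp⟩ := step_lift hs
          exact ⟨E', ⟨SExp.up (StExp.star e₂),
            (rtg_one_st rG e₂).tail (SExp.SStep.stOne tG), s⟩, hp⟩

lemma sreach_step {e : StExp A} {F F' : SExp A} {l : Option A}
    (h : F ∈ SReach e) (s : SExp.SStep F l F') : F' ∈ SReach e :=
  Relation.ReflTransGen.tail h ⟨l, s⟩

lemma rtg_one_step_back {F u : SExp A} (r : Relation.ReflTransGen SExp.OneStep F u)
    {a : A} {g : StExp A} (h : StExp.Step u.proj a g) : StExp.Step F.proj a g := by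
  induction r with
  | refl => exact h
  | tail _ hs ih => exact ih (((sstep_proj hs).2 rfl).1 _ _ h)

lemma rtg_one_term_back {F u : SExp A} (r : Relation.ReflTransGen SExp.OneStep F u)
    (h : StExp.Term u.proj) : StExp.Term F.proj := by
  induction r with
  | refl => exact h
  | tail _ hs ih => exact ih (((sstep_proj hs).2 rfl).2 h)

/-- Upgrade a `OneStep` path starting in `SReach e` to a chart path, obtaining
also membership of the endpoint. -/
lemma rtg_one_mem {e : StExp A} {F u : SExp A}
    (hF : F ∈ SReach e) (r : Relation.ReflTransGen SExp.OneStep F u) :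
    Relation.ReflTransGen (fun s t => (oneChartInt e).step s none t) F u ∧
      u ∈ SReach e := by
  induction r with
  | refl => exact ⟨Relation.ReflTransGen.refl, hF⟩
  | tail _ hs ih =>
      exact ⟨ih.1.tail ⟨ih.2, hs⟩, sreach_step ih.2 hs⟩

lemma rtg_chart_one {e : StExp A} {F u : SExp A}
    (r : Relation.ReflTransGen (fun s t => (oneChartInt e).step s none t) F u) :
    Relation.ReflTransGen SExp.OneStep F u := by
  induction r with
  | refl => exact Relation.ReflTransGen.refl
  | tail _ hs ih => exact ih.tail hs.2

end Aux

/-- For every star expression `e`, the projection function `π`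
restricts to a functional bisimulation from the induced chart of the 1-chart
interpretation `C1(e)` to the chart interpretation `C(e)`; in particular
`ind(C1(e))` and `C(e)` are bisimilar. -/
theorem projection_restricts_to_functional_bisimulation {A : Type u} (e : StExp A) :
    IsChartBisim (indChart (oneChartInt e)) (chartInt e)
      (fun F g => F ∈ SReach e ∧ g ∈ MReach e ∧ SExp.proj F = g) ∧
    (∀ (F : SExp A) (g g' : StExp A),
      (F ∈ SReach e ∧ g ∈ MReach e ∧ SExp.proj F = g) →
      (F ∈ SReach e ∧ g' ∈ MReach e ∧ SExp.proj F = g') → g = g') ∧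
    ChartBisimilar (indChart (oneChartInt e)) (chartInt e) := by
  have hbisim : IsChartBisim (indChart (oneChartInt e)) (chartInt e)
      (fun F g => F ∈ SReach e ∧ g ∈ MReach e ∧ SExp.proj F = g) := by
    refine ⟨fun x y hxy => ⟨hxy.1, hxy.2.1⟩,
      ⟨Relation.ReflTransGen.refl, Relation.ReflTransGen.refl, proj_flatUp e⟩,
      fun F g hFg => ?_⟩
    obtain ⟨hF, hg, hproj⟩ := hFg
    refine ⟨?_, ?_, ?_⟩
    · -- induced transitions are matched by projected transitions
      rintro a F' ⟨u, ru, hu, su⟩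
      have ru' := rtg_chart_one ru
      have hstep : StExp.Step F.proj a F'.proj :=
        rtg_one_step_back ru' ((sstep_proj su).1 a rfl)
      rw [hproj] at hstep
      exact ⟨F'.proj, ⟨hg, hstep⟩,
        sreach_step hu su, Relation.ReflTransGen.tail hg ⟨a, hstep⟩, rfl⟩
    · -- projected transitions are matched by induced transitions
      rintro a g' ⟨-, hstep⟩
      rw [← hproj] at hstep
      obtain ⟨F', ⟨u, ru, su⟩, hp⟩ := istep_lift hstep
      obtain ⟨ru', hu⟩ := rtg_one_mem hF ru
      refine ⟨F', ⟨u, ru', hu, su⟩, sreach_step hu su, ?_, hp⟩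
      rw [hproj] at hstep
      exact Relation.ReflTransGen.tail hg ⟨a, hstep⟩
    · constructor
      · rintro ⟨u, ru, hu, tu⟩
        have := rtg_one_term_back (rtg_chart_one ru) (sterm_proj tu)
        rw [hproj] at this
        exact ⟨hg, this⟩
      · rintro ⟨-, ht⟩
        rw [← hproj] at ht
        obtain ⟨G, rG, tG⟩ := term_lift ht
        obtain ⟨rG', hG⟩ := rtg_one_mem hF rG
        exact ⟨G, rG', hG, tG⟩
  exact ⟨hbisim, fun F g g' h h' => h.2.2 ▸ h'.2.2 ▸ rfl, _, hbisim⟩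
end

section
/- For every star expression e over an action set A, the 1-chart interpretation C1(e) satisfies the loop existence and elimination property LEE. -/
universe u v w

/-! ### Auxiliary lemmas for the LEE proof -/

namespace LEEProof

open SExp StExp Relation

variable {A : Type u}

/-- Body step (marked transition with mark 0). -/
def Bo (X Y : SExp A) : Prop := ∃ l, SExp.MStep X (l, 0) Y

/-- Entry step: a transition with no body marking. -/
def IsEntry (x : SExp A) (l : Option A) (y : SExp A) : Prop :=
  SExp.SStep x l y ∧ ¬ SExp.MStep x (l, 0) y

theorem step_canonical {X : SExp A} {l : Option A} {Y : SExp A}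
    (h : SExp.SStep X l Y) : SExp.Canonical Y := by
  induction h with
  | act => trivial
  | addL _ ih => exact ih
  | addR _ ih => exact ih
  | upMulL _ ih => exact ih
  | upMulR _ _ ih => exact ih
  | upStar _ ih => exact ih
  | prL _ ih => exact ih
  | prR _ _ ih => exact ih
  | stL _ ih => exact ih
  | stOne => trivial

theorem flatUp_canonical (e : StExp A) : SExp.Canonical (SExp.flatUp e) := by
  induction e with
  | mul e₁ e₂ ih₁ ih₂ => exact ih₁
  | zero => trivial
  | one => trivial
  | act a => trivial
  | add _ _ _ _ => trivial
  | star _ _ => trivial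

theorem no_none_up : ∀ {f : StExp A} {F : SExp A}, ¬ SExp.SStep (SExp.up f) none F := by
  intro f F h
  generalize hX : SExp.up f = X at h
  generalize hl : (none : Option A) = l at h
  induction h generalizing f with
  | act => cases hl
  | addL _ _ => cases hl
  | addR _ _ => cases hl
  | upMulL h ih => cases hX; exact ih rfl hl
  | upMulR _ _ _ => cases hl
  | upStar _ _ => cases hl
  | prL _ _ => cases hX
  | prR _ _ _ => cases hl
  | stL _ _ => cases hX
  | stOne _ => cases hX

theorem erase {X : SExp A} {l : Option A} {m : ℕ} {Y : SExp A}
    (h : SExp.MStep X (l, m) Y) : SExp.SStep X l Y := by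
  generalize hL : (l, m) = L at h
  induction h generalizing l m with
  | act => cases hL; exact SExp.SStep.act
  | addL _ ih => cases hL; exact SExp.SStep.addL (ih rfl)
  | addR _ ih => cases hL; exact SExp.SStep.addR (ih rfl)
  | upMulL _ ih => cases hL; exact SExp.SStep.upMulL (ih rfl)
  | upMulR ht _ ih => cases hL; exact SExp.SStep.upMulR ht (ih rfl)
  | upStarP _ _ ih => cases hL; exact SExp.SStep.upStar (ih rfl)
  | upStarN _ _ ih => cases hL; exact SExp.SStep.upStar (ih rfl)
  | prL _ ih => cases hL; exact SExp.SStep.prL (ih rfl)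
  | prR ht _ ih => cases hL; exact SExp.SStep.prR ht (ih rfl)
  | stL _ ih => cases hL; exact SExp.SStep.stL (ih rfl)
  | stOne ht => cases hL; exact SExp.SStep.stOne ht

theorem total {X : SExp A} {l : Option A} {Y : SExp A}
    (h : SExp.SStep X l Y) : ∃ m, SExp.MStep X (l, m) Y := by
  induction h with
  | act => exact ⟨0, SExp.MStep.act⟩
  | addL _ ih => obtain ⟨m, hm⟩ := ih; exact ⟨0, SExp.MStep.addL hm⟩
  | addR _ ih => obtain ⟨m, hm⟩ := ih; exact ⟨0, SExp.MStep.addR hm⟩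
  | upMulL _ ih => obtain ⟨m, hm⟩ := ih; exact ⟨m, SExp.MStep.upMulL hm⟩
  | upMulR ht _ ih => obtain ⟨m, hm⟩ := ih; exact ⟨0, SExp.MStep.upMulR ht hm⟩
  | @upStar e a E' _ ih =>
      obtain ⟨m, hm⟩ := ih
      by_cases hn : SExp.NormedP (SExp.up e)
      · exact ⟨e.height + 1, SExp.MStep.upStarP hn hm⟩
      · exact ⟨0, SExp.MStep.upStarN hn hm⟩
  | prL _ ih => obtain ⟨m, hm⟩ := ih; exact ⟨m, SExp.MStep.prL hm⟩
  | prR ht _ ih => obtain ⟨m, hm⟩ := ih; exact ⟨0, SExp.MStep.prR ht hm⟩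
  | stL _ ih => obtain ⟨m, hm⟩ := ih; exact ⟨m, SExp.MStep.stL hm⟩
  | stOne ht => exact ⟨0, SExp.MStep.stOne ht⟩

theorem markBound {X : SExp A} {l : Option A} {m : ℕ} {Y : SExp A}
    (h : SExp.MStep X (l, m) Y) : m ≤ SExp.heightS X := by
  generalize hL : (l, m) = L at h
  induction h generalizing l m with
  | act => cases hL; exact Nat.zero_le _
  | addL _ _ => cases hL; exact Nat.zero_le _
  | addR _ _ => cases hL; exact Nat.zero_le _
  | upMulL _ ih =>
      cases hL
      exact le_trans (ih rfl) (le_max_left _ _)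
  | upMulR _ _ _ => cases hL; exact Nat.zero_le _
  | upStarP _ _ _ => cases hL; exact le_refl _
  | upStarN _ _ _ => cases hL; exact Nat.zero_le _
  | prL _ ih => cases hL; exact le_trans (ih rfl) (le_max_left _ _)
  | prR _ _ _ => cases hL; exact Nat.zero_le _
  | stL _ ih => cases hL; exact le_trans (ih rfl) (le_max_left _ _)
  | stOne _ => cases hL; exact Nat.zero_le _

theorem hstep {X : SExp A} {l : Option A} {Y : SExp A}
    (h : SExp.SStep X l Y) : SExp.heightS Y ≤ SExp.heightS X := by
  induction h with
  | act => exact le_refl _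
  | @addL e₁ e₂ _ _ _ ih => exact le_trans ih (le_max_left _ _)
  | @addR e₁ e₂ _ _ _ ih => exact le_trans ih (le_max_right _ _)
  | upMulL _ ih => exact max_le_max ih (le_refl _)
  | upMulR _ _ ih => exact le_trans ih (le_max_right _ _)
  | upStar _ ih =>
      exact max_le (le_trans ih (Nat.le_succ _)) (le_refl _)
  | prL _ ih => exact max_le_max ih (le_refl _)
  | prR _ _ ih => exact le_trans ih (le_max_right _ _)
  | stL _ ih => exact max_le_max ih (le_refl _)
  | stOne _ => exact le_max_right _ _

theorem fill_inj {C : AppCtx A} {X Y : SExp A}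
    (h : C.fill X = C.fill Y) : X = Y := by
  induction C generalizing X Y with
  | hole => exact h
  | pr C' b ih => exact ih (by injection h)
  | st C' b ih => exact ih (by injection h)

theorem fill_up_inj : ∀ {C C' : AppCtx A} {f f' : StExp A},
    C.fill (SExp.up f) = C'.fill (SExp.up f') → C = C' ∧ f = f' := by
  intro C
  induction C with
  | hole =>
      intro C' f f' h
      cases C' with
      | hole => injection h with h; exact ⟨rfl, h⟩
      | pr C₂ b => cases h
      | st C₂ b => cases h
  | pr C₁ b ih =>
      intro C' f f' h
      cases C' with
      | hole => cases h
      | pr C₂ b' =>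
          injection h with h1 h2
          obtain ⟨hc, hf⟩ := ih h1
          exact ⟨by rw [hc, h2], hf⟩
      | st C₂ b' => cases h
  | st C₁ b ih =>
      intro C' f f' h
      cases C' with
      | hole => cases h
      | pr C₂ b' => cases h
      | st C₂ b' =>
          injection h with h1 h2
          obtain ⟨hc, hf⟩ := ih h1
          exact ⟨by rw [hc, h2], hf⟩

theorem fill_st_ne_fill_up {C : AppCtx A} {E : SExp A} {g f : StExp A} :
    C.fill (SExp.st E g) ≠ C.fill (SExp.up f) := by
  intro h
  cases fill_inj h

theorem heightS_fill_ge (C : AppCtx A) (X : SExp A) :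
    SExp.heightS X ≤ SExp.heightS (C.fill X) := by
  induction C with
  | hole => exact le_refl _
  | pr C' b ih => exact le_trans ih (le_max_left _ _)
  | st C' b ih => exact le_trans ih (le_max_left _ _)

theorem liftS {X Y : SExp A} {l : Option A} (C : AppCtx A)
    (h : SExp.SStep X l Y) : SExp.SStep (C.fill X) l (C.fill Y) := by
  induction C with
  | hole => exact h
  | pr C' b ih => exact SExp.SStep.prL ih
  | st C' b ih => exact SExp.SStep.stL ih

theorem liftM {X Y : SExp A} {L : Option A × ℕ} (C : AppCtx A)
    (h : SExp.MStep X L Y) : SExp.MStep (C.fill X) L (C.fill Y) := by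
  induction C with
  | hole => exact h
  | pr C' b ih => exact SExp.MStep.prL ih
  | st C' b ih => exact SExp.MStep.stL ih

theorem sterm_fill_st : ∀ {C : AppCtx A} {E : SExp A} {g : StExp A},
    ¬ SExp.STerm (C.fill (SExp.st E g)) := by
  intro C
  induction C with
  | hole => intro E g h; cases h
  | pr C' b ih => intro E g h; cases h with | pr h1 h2 => exact ih h1
  | st C' b ih => intro E g h; cases h

/-- Lemma F: steps from a filled stacked product are inner steps or the exit. -/
theorem stepF : ∀ {C : AppCtx A} {E : SExp A} {g : StExp A} {l : Option A} {Y : SExp A},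
    SExp.SStep (C.fill (SExp.st E g)) l Y →
    (∃ E', SExp.SStep E l E' ∧ Y = C.fill (SExp.st E' g)) ∨
    (SExp.STerm E ∧ l = none ∧ Y = C.fill (SExp.up (StExp.star g))) := by
  intro C
  induction C with
  | hole =>
      intro E g l Y h
      cases h with
      | stL h' => exact Or.inl ⟨_, h', rfl⟩
      | stOne ht => exact Or.inr ⟨ht, rfl, rfl⟩
  | pr C' b ih =>
      intro E g l Y h
      cases h with
      | prL h' =>
          rcases ih h' with ⟨E', hs, rfl⟩ | ⟨ht, hl, rfl⟩
          · exact Or.inl ⟨E', hs, rfl⟩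
          · exact Or.inr ⟨ht, hl, rfl⟩
      | prR ht _ => exact absurd ht sterm_fill_st
  | st C' b ih =>
      intro E g l Y h
      cases h with
      | stL h' =>
          rcases ih h' with ⟨E', hs, rfl⟩ | ⟨ht, hl, rfl⟩
          · exact Or.inl ⟨E', hs, rfl⟩
          · exact Or.inr ⟨ht, hl, rfl⟩
      | stOne ht => exact absurd ht sterm_fill_st

/-- size of star expressions -/
def sz : StExp A → ℕ
  | .zero => 1
  | .one => 1
  | .act _ => 1
  | .add e₁ e₂ => sz e₁ + sz e₂ + 1
  | .mul e₁ e₂ => sz e₁ + sz e₂ + 1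
  | .star e => sz e + 1

theorem target_pr_size : ∀ {b : StExp A} {l : Option A} {Z : SExp A},
    SExp.SStep (SExp.up b) l Z → ∀ {X : SExp A} {c : StExp A}, Z = SExp.pr X c → sz c < sz b := by
  intro b l Z h
  generalize hX : SExp.up b = W at h
  induction h generalizing b with
  | act => intro X c hc; cases hc
  | addL h' ih =>
      cases hX
      intro X c hc
      exact lt_trans (ih rfl hc) (by simp only [sz]; omega)
  | addR h' ih =>
      cases hX
      intro X c hc
      exact lt_trans (ih rfl hc) (by simp only [sz]; omega)
  | upMulL h' ih =>
      cases hX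
      intro X c hc
      injection hc with h1 h2
      subst h2
      simp only [sz]; omega
  | upMulR _ h' ih =>
      cases hX
      intro X c hc
      exact lt_trans (ih rfl hc) (by simp only [sz]; omega)
  | upStar _ _ => cases hX; intro X c hc; cases hc
  | prL _ _ => cases hX
  | prR _ _ _ => cases hX
  | stL _ _ => cases hX
  | stOne _ => cases hX

theorem target_ne_pr_self {b : StExp A} {l : Option A} {X : SExp A}
    (h : SExp.SStep (SExp.up b) l (SExp.pr X b)) : False :=
  lt_irrefl _ (target_pr_size h rfl)

/-- Lemma H: if a filled stacked product is also a filled `up`, the `up` part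
sits inside the inner component. -/
theorem fill_st_up_height : ∀ {C C' : AppCtx A} {E : SExp A} {g f : StExp A},
    C.fill (SExp.st E g) = C'.fill (SExp.up f) →
    SExp.heightS (SExp.up f) ≤ SExp.heightS E := by
  intro C
  induction C with
  | hole =>
      intro C' E g f h
      cases C' with
      | hole => cases h
      | pr C₂ b => cases h
      | st C₂ b =>
          injection h with h1 h2
          rw [h1]
          exact heightS_fill_ge _ _
  | pr C₁ b ih =>
      intro C' E g f h
      cases C' with
      | hole => cases h
      | pr C₂ b' => injection h with h1 h2; exact ih h1
      | st C₂ b' => cases h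
  | st C₁ b ih =>
      intro C' E g f h
      cases C' with
      | hole => cases h
      | pr C₂ b' => cases h
      | st C₂ b' => injection h with h1 h2; exact ih h1

/-- Lemma I: an entry transition of a loop at a normed star has no body
marking. -/
theorem no_zero_mark_entry : ∀ {C : AppCtx A} {g : StExp A} {E'' : SExp A} {l : Option A},
    SExp.NormedP (SExp.up g) →
    ¬ SExp.MStep (C.fill (SExp.up (StExp.star g))) (l, 0) (C.fill (SExp.st E'' g)) := by
  intro C
  induction C with
  | hole =>
      intro g E'' l hn h
      generalize hL : (l, (0:ℕ)) = L at h
      cases h with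
      | upStarP _ _ => cases hL
      | upStarN hnn _ => exact hnn hn
  | pr C' b ih =>
      intro g E'' l hn h
      generalize hL : (l, (0:ℕ)) = L at h
      cases h with
      | prL h' => cases hL; exact ih hn h'
      | prR _ h' => cases hL; exact target_ne_pr_self (erase h')
  | st C' b ih =>
      intro g E'' l hn h
      generalize hL : (l, (0:ℕ)) = L at h
      cases h with
      | stL h' => cases hL; exact ih hn h'

/-- Lemma G': decomposition of positively marked transitions from canonical
expressions. -/
theorem entry_decomp {X : SExp A} {l : Option A} {m : ℕ} {Y : SExp A}
    (h : SExp.MStep X (l, m) Y) (hc : SExp.Canonical X) (hm : 0 < m) :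
    ∃ (C : AppCtx A) (g : StExp A) (a : A) (E' : SExp A),
      X = C.fill (SExp.up (StExp.star g)) ∧ Y = C.fill (SExp.st E' g) ∧
      l = some a ∧ m = g.height + 1 ∧ SExp.SStep (SExp.up g) (some a) E' ∧
      SExp.NormedP (SExp.up g) ∧ SExp.heightS E' ≤ g.height := by
  generalize hL : (l, m) = L at h
  induction h generalizing l m with
  | act => cases hL; exact absurd hm (lt_irrefl 0)
  | addL _ _ => cases hL; exact absurd hm (lt_irrefl 0)
  | addR _ _ => cases hL; exact absurd hm (lt_irrefl 0)
  | upMulL _ _ => cases hL; exact absurd hc (by intro hh; exact hh)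
  | upMulR _ _ _ => cases hL; exact absurd hm (lt_irrefl 0)
  | @upStarP g a n E' hn hstp _ =>
      cases hL
      exact ⟨AppCtx.hole, g, a, E', rfl, rfl, rfl, rfl, erase hstp, hn,
        le_trans (hstep (erase hstp)) (le_refl _)⟩
  | upStarN _ _ _ => cases hL; exact absurd hm (lt_irrefl 0)
  | @prL E₁ E₁' e₂ L h' ih =>
      cases hL
      obtain ⟨C, g, a, E', h1, h2, h3, h4, h5, h6, h7⟩ := ih hc hm rfl
      exact ⟨AppCtx.pr C e₂, g, a, E', by rw [h1]; rfl, by rw [h2]; rfl, h3, h4, h5, h6, h7⟩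
  | prR _ _ _ => cases hL; exact absurd hm (lt_irrefl 0)
  | @stL E₁ E₁' e₂ L h' ih =>
      cases hL
      obtain ⟨C, g, a, E', h1, h2, h3, h4, h5, h6, h7⟩ := ih hc hm rfl
      exact ⟨AppCtx.st C e₂, g, a, E', by rw [h1]; rfl, by rw [h2]; rfl, h3, h4, h5, h6, h7⟩
  | stOne _ => cases hL; exact absurd hm (lt_irrefl 0)

/-- A finite overapproximation of the reachable stacked star expressions. -/
def der : StExp A → Set (SExp A)
  | .zero => {SExp.up StExp.zero}
  | .one => {SExp.up StExp.one}
  | .act a => {SExp.up (StExp.act a), SExp.up StExp.one}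
  | .add e₁ e₂ => insert (SExp.up (StExp.add e₁ e₂)) (der e₁ ∪ der e₂)
  | .mul e₁ e₂ =>
      insert (SExp.up (StExp.mul e₁ e₂)) ((fun E => SExp.pr E e₂) '' der e₁ ∪ der e₂)
  | .star f => insert (SExp.up (StExp.star f)) ((fun E => SExp.st E f) '' der f)

theorem up_mem_der (e : StExp A) : SExp.up e ∈ der e := by
  cases e <;> simp [der]

theorem der_finite (e : StExp A) : (der e).Finite := by
  induction e with
  | zero => exact Set.finite_singleton _
  | one => exact Set.finite_singleton _
  | act a => exact (Set.finite_singleton _).insert _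
  | add e₁ e₂ ih₁ ih₂ => exact ((ih₁.union ih₂).insert _)
  | mul e₁ e₂ ih₁ ih₂ => exact (((ih₁.image _).union ih₂).insert _)
  | star f ih => exact ((ih.image _).insert _)

theorem der_height : ∀ (e : StExp A) {F : SExp A}, F ∈ der e → SExp.heightS F ≤ e.height := by
  intro e
  induction e with
  | zero => intro F hF; cases hF; exact le_refl _
  | one => intro F hF; cases hF; exact le_refl _
  | act a =>
      intro F hF
      rcases hF with hF | hF <;> (cases hF; exact le_refl _)
  | add e₁ e₂ ih₁ ih₂ =>
      intro F hF
      rcases hF with hF | hF | hF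
      · cases hF; exact le_refl _
      · exact le_trans (ih₁ hF) (le_max_left _ _)
      · exact le_trans (ih₂ hF) (le_max_right _ _)
  | mul e₁ e₂ ih₁ ih₂ =>
      intro F hF
      rcases hF with hF | ⟨E, hE, rfl⟩ | hF
      · cases hF; exact le_refl _
      · exact max_le_max (ih₁ hE) (le_refl _)
      · exact le_trans (ih₂ hF) (le_max_right _ _)
  | star f ih =>
      intro F hF
      rcases hF with hF | ⟨E, hE, rfl⟩
      · cases hF; exact le_refl _
      · exact max_le (le_trans (ih hE) (Nat.le_succ _)) (le_refl _)

theorem flatUp_mem_der (e : StExp A) : SExp.flatUp e ∈ der e := by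
  induction e with
  | mul e₁ e₂ ih₁ ih₂ =>
      show SExp.pr (SExp.flatUp e₁) e₂ ∈ _
      exact Or.inr (Or.inl ⟨_, ih₁, rfl⟩)
  | zero => exact rfl
  | one => exact rfl
  | act a => exact Or.inl rfl
  | add e₁ e₂ _ _ => exact Or.inl rfl
  | star f _ => exact Or.inl rfl

theorem der_closed : ∀ (e : StExp A) {F : SExp A} {l : Option A} {G : SExp A},
    F ∈ der e → SExp.SStep F l G → G ∈ der e := by
  intro e
  induction e with
  | zero =>
      intro F l G hF h; cases hF; cases h
  | one =>
      intro F l G hF h; cases hF; cases h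
  | act a =>
      intro F l G hF h
      rcases hF with hF | hF
      · cases hF; cases h; exact Or.inr rfl
      · cases hF; cases h
  | add e₁ e₂ ih₁ ih₂ =>
      intro F l G hF h
      rcases hF with hF | hF | hF
      · cases hF
        cases h with
        | addL h' => exact Or.inr (Or.inl (ih₁ (up_mem_der e₁) h'))
        | addR h' => exact Or.inr (Or.inr (ih₂ (up_mem_der e₂) h'))
      · exact Or.inr (Or.inl (ih₁ hF h))
      · exact Or.inr (Or.inr (ih₂ hF h))
  | mul e₁ e₂ ih₁ ih₂ =>
      intro F l G hF h
      rcases hF with hF | ⟨E, hE, rfl⟩ | hF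
      · cases hF
        cases h with
        | upMulL h' => exact Or.inr (Or.inl ⟨_, ih₁ (up_mem_der e₁) h', rfl⟩)
        | upMulR _ h' => exact Or.inr (Or.inr (ih₂ (up_mem_der e₂) h'))
      · cases h with
        | prL h' => exact Or.inr (Or.inl ⟨_, ih₁ hE h', rfl⟩)
        | prR _ h' => exact Or.inr (Or.inr (ih₂ (up_mem_der e₂) h'))
      · exact Or.inr (Or.inr (ih₂ hF h))
  | star f ih =>
      intro F l G hF h
      rcases hF with hF | ⟨E, hE, rfl⟩
      · cases hF
        cases h with
        | upStar h' => exact Or.inr ⟨_, ih (up_mem_der f) h', rfl⟩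
      · cases h with
        | stL h' => exact Or.inr ⟨_, ih hE h', rfl⟩
        | stOne _ => exact Or.inl rfl

theorem reach_sub_der (e : StExp A) : SReach e ⊆ der e := by
  intro F hF
  induction hF with
  | refl => exact flatUp_mem_der e
  | tail _ h ih => obtain ⟨l, hl⟩ := h; exact der_closed e ih hl

theorem reach_canonical (e : StExp A) {F : SExp A} (hF : F ∈ SReach e) :
    SExp.Canonical F := by
  induction hF with
  | refl => exact flatUp_canonical e
  | tail _ h ih => obtain ⟨l, hl⟩ := h; exact step_canonical hl

theorem bo_astep {X Y : SExp A} (h : Bo X Y) : SExp.AStep X Y := by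
  obtain ⟨l, hl⟩ := h; exact ⟨l, erase hl⟩

theorem rtg_bo_astep {X Y : SExp A} (h : Relation.ReflTransGen Bo X Y) :
    Relation.ReflTransGen SExp.AStep X Y :=
  Relation.ReflTransGen.mono (fun _ _ => bo_astep) _ _ h

/-- Lemma C: an expression that can reach a terminating one is induced
terminating or normed⁺. -/
theorem normed_split : ∀ {E F : SExp A}, Relation.ReflTransGen SExp.AStep E F →
    SExp.STerm F → SExp.ITerm E ∨ SExp.NormedP E := by
  intro E F h
  induction h using Relation.ReflTransGen.head_induction_on with
  | refl => intro hT; exact Or.inl ⟨F, Relation.ReflTransGen.refl, hT⟩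
  | head hs _ ih =>
      rename_i X X₁ _
      intro hT
      rcases ih hT with hI | hN
      · obtain ⟨l, hl⟩ := hs
        cases l with
        | none =>
            obtain ⟨G, hG, hGt⟩ := hI
            exact Or.inl ⟨G, Relation.ReflTransGen.head hl hG, hGt⟩
        | some a =>
            exact Or.inr ⟨X₁, Relation.TransGen.single ⟨a, X, Relation.ReflTransGen.refl, hl⟩, hI⟩
      · obtain ⟨l, hl⟩ := hs
        cases l with
        | none =>
            obtain ⟨F', tg, it⟩ := hN
            obtain ⟨b, ⟨a', M, rtg1, hs1⟩, rest⟩ := (Relation.TransGen.head'_iff).mp tg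
            refine Or.inr ⟨F', Relation.TransGen.head'_iff.mpr
              ⟨b, ⟨a', M, Relation.ReflTransGen.head hl rtg1, hs1⟩, rest⟩, it⟩
        | some a =>
            obtain ⟨F', tg, it⟩ := hN
            exact Or.inr ⟨F', Relation.TransGen.head ⟨a, X, Relation.ReflTransGen.refl, hl⟩ tg, it⟩

theorem normedP_of_step_reach {f : StExp A} {a : A} {E' F : SExp A}
    (h0 : SExp.SStep (SExp.up f) (some a) E')
    (h1 : Relation.ReflTransGen SExp.AStep E' F) (h2 : SExp.STerm F) :
    SExp.NormedP (SExp.up f) := by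
  rcases normed_split h1 h2 with hI | hN
  · exact ⟨E', Relation.TransGen.single ⟨a, SExp.up f, Relation.ReflTransGen.refl, h0⟩, hI⟩
  · obtain ⟨F', tg, it⟩ := hN
    exact ⟨F', Relation.TransGen.head ⟨a, SExp.up f, Relation.ReflTransGen.refl, h0⟩ tg, it⟩

theorem no_inf_of_acc {α : Type v} {r : α → α → Prop} {a : α}
    (h : Acc (fun y x => r x y) a) :
    ∀ p : ℕ → α, p 0 = a → ¬ (∀ i, r (p i) (p (i + 1))) := by
  induction h with
  | intro x hx ih =>
      intro p hp hstep
      exact ih (p 1) (hp ▸ hstep 0) (fun i => p (i + 1)) rfl (fun i => hstep (i + 1))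

/-- W1: no infinite body path from any expression in `der e`. -/
theorem accBo : ∀ (e : StExp A) {E : SExp A}, E ∈ der e →
    Acc (fun Y X => Bo X Y) E := by
  intro e
  induction e with
  | zero =>
      intro E hE; cases hE
      constructor; rintro Y ⟨l, M⟩; cases M
  | one =>
      intro E hE; cases hE
      constructor; rintro Y ⟨l, M⟩; cases M
  | act a =>
      intro E hE
      have h1 : Acc (fun Y X => Bo X Y) (SExp.up (StExp.one : StExp A)) := by
        constructor; rintro Y ⟨l, M⟩; cases M
      rcases hE with hE | hE
      · cases hE
        constructor; rintro Y ⟨l, M⟩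
        cases M; exact h1
      · cases hE; exact h1
  | add e₁ e₂ ih₁ ih₂ =>
      intro E hE
      rcases hE with hE | hE | hE
      · cases hE
        constructor; rintro Y ⟨l, M⟩
        cases M with
        | addL h' => exact ih₁ (der_closed e₁ (up_mem_der e₁) (erase h'))
        | addR h' => exact ih₂ (der_closed e₂ (up_mem_der e₂) (erase h'))
      · exact ih₁ hE
      · exact ih₂ hE
  | mul e₁ e₂ ih₁ ih₂ =>
      intro E hE
      have key : ∀ E, Acc (fun Y X => Bo X Y) E → E ∈ der e₁ →
          Acc (fun Y X => Bo X Y) (SExp.pr E e₂) := by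
        intro E hAcc
        induction hAcc with
        | intro x hx ih =>
            intro hxd
            constructor; rintro Y ⟨l, M⟩
            cases M with
            | prL h' => exact ih _ ⟨l, h'⟩ (der_closed e₁ hxd (erase h'))
            | prR _ h' => exact ih₂ (der_closed e₂ (up_mem_der e₂) (erase h'))
      rcases hE with hE | ⟨E₁, hE₁, rfl⟩ | hE
      · cases hE
        constructor; rintro Y ⟨l, M⟩
        cases M with
        | upMulL h' =>
            exact key _ (ih₁ (der_closed e₁ (up_mem_der e₁) (erase h')))
              (der_closed e₁ (up_mem_der e₁) (erase h'))
        | upMulR _ h' => exact ih₂ (der_closed e₂ (up_mem_der e₂) (erase h'))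
      · exact key _ (ih₁ hE₁) hE₁
      · exact ih₂ hE
  | star f ih =>
      intro E hE
      have hstar : Acc (fun Y X => Bo X Y) (SExp.up (StExp.star f)) := by
        by_cases hn : SExp.NormedP (SExp.up f)
        · constructor; rintro Y ⟨l, M⟩
          cases M with
          | upStarN hnn _ => exact absurd hn hnn
        · have lemB : ∀ E, Acc (fun Y X => Bo X Y) E →
              (∀ F, Relation.ReflTransGen Bo E F → ¬ SExp.STerm F) →
              Acc (fun Y X => Bo X Y) (SExp.st E f) := by
            intro E hAcc
            induction hAcc with
            | intro x hx ihx =>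
                intro hprop
                constructor; rintro Y ⟨l, M⟩
                cases M with
                | stL h' =>
                    exact ihx _ ⟨l, h'⟩
                      (fun F hF hT => hprop F (Relation.ReflTransGen.head ⟨l, h'⟩ hF) hT)
                | stOne ht => exact absurd ht (hprop _ Relation.ReflTransGen.refl)
          constructor; rintro Y ⟨l, M⟩
          cases M with
          | @upStarN _ a n E' _ h' =>
              refine lemB E' (ih (der_closed f (up_mem_der f) (erase h'))) ?_
              intro F hF hT
              exact hn (normedP_of_step_reach (erase h') (rtg_bo_astep hF) hT)
      have key2 : ∀ E, Acc (fun Y X => Bo X Y) E →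
          Acc (fun Y X => Bo X Y) (SExp.st E f) := by
        intro E hAcc
        induction hAcc with
        | intro x hx ihx =>
            constructor; rintro Y ⟨l, M⟩
            cases M with
            | stL h' => exact ihx _ ⟨l, h'⟩
            | stOne _ => exact hstar
      rcases hE with hE | ⟨E₁, hE₁, rfl⟩
      · cases hE; exact hstar
      · exact key2 _ (ih hE₁)

theorem rtg_chain {α : Type v} {r : α → α → Prop} {a b : α}
    (h : Relation.ReflTransGen r a b) :
    ∃ (m : ℕ) (f : ℕ → α), f 0 = a ∧ f m = b ∧ ∀ i < m, r (f i) (f (i + 1)) := by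
  induction h with
  | refl => exact ⟨0, fun _ => a, rfl, rfl, fun i hi => absurd hi (Nat.not_lt_zero i)⟩
  | @tail b c hab hbc ih =>
      obtain ⟨m, f, h0, hm, hsteps⟩ := ih
      refine ⟨m + 1, fun i => if i ≤ m then f i else c, by simp [h0], by simp, ?_⟩
      intro i hi
      by_cases him : i < m
      · simpa [Nat.le_of_lt him, Nat.succ_le_of_lt him] using hsteps i him
      · have : i = m := by omega
        subst this
        simpa [hm] using hbc

theorem chain_rtg {α : Type v} {r : α → α → Prop} (f : ℕ → α) :
    ∀ m : ℕ, (∀ i < m, r (f i) (f (i + 1))) → Relation.ReflTransGen r (f 0) (f m) := by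
  intro m
  induction m with
  | zero => intro _; exact Relation.ReflTransGen.refl
  | succ m ih =>
      intro h
      exact Relation.ReflTransGen.tail (ih fun i hi => h i (Nat.lt_succ_of_lt hi))
        (h m (Nat.lt_succ_self m))

/-- From any path to a terminating expression there is a body path to a
terminating expression. -/
theorem bodyNormed : ∀ (n : ℕ) (E : SExp A), SExp.Canonical E →
    ∀ f : ℕ → SExp A, f 0 = E → (∀ i < n, ∃ l, SExp.SStep (f i) l (f (i + 1))) →
    SExp.STerm (f n) →
    ∃ G, Relation.ReflTransGen Bo E G ∧ SExp.STerm G := by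
  intro n
  induction n using Nat.strong_induction_on with
  | _ n IH =>
    intro E hc f hf0 hsteps hterm
    rcases Nat.eq_zero_or_pos n with rfl | hn
    · exact ⟨E, Relation.ReflTransGen.refl, hf0 ▸ hterm⟩
    obtain ⟨l, hs⟩ := hsteps 0 hn
    by_cases h0 : SExp.MStep (f 0) (l, 0) (f 1)
    · -- body first step
      obtain ⟨G, hG, hGt⟩ := IH (n - 1) (by omega) (f 1) (step_canonical hs)
        (fun i => f (i + 1)) rfl
        (fun i hi => hsteps (i + 1) (by omega))
        (by show SExp.STerm (f (n - 1 + 1))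
            have : n - 1 + 1 = n := by omega
            rw [this]; exact hterm)
      exact ⟨G, Relation.ReflTransGen.head ⟨l, hf0 ▸ h0⟩ hG, hGt⟩
    · -- entry first step
      obtain ⟨m', hM⟩ := total hs
      have hm' : 0 < m' := by
        rcases Nat.eq_zero_or_pos m' with rfl | h; · exact absurd hM h0
        · exact h
      obtain ⟨C, g, a, E', hX, hY, _, _, _, _, _⟩ :=
        entry_decomp hM (hf0 ▸ hc) hm'
      classical
      have hPn : 1 ≤ n ∧ n ≤ n ∧ ¬ ∃ E₂, f n = C.fill (SExp.st E₂ g) := by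
        refine ⟨hn, le_refl n, ?_⟩
        rintro ⟨E₂, hE₂⟩
        exact sterm_fill_st (hE₂ ▸ hterm)
      let P : ℕ → Prop := fun k => 1 ≤ k ∧ k ≤ n ∧ ¬ ∃ E₂, f k = C.fill (SExp.st E₂ g)
      have hex : ∃ k, P k := ⟨n, hPn⟩
      let k := Nat.find hex
      have hk : P k := Nat.find_spec hex
      have hmin : ∀ j, j < k → ¬ P j := fun j hj => Nat.find_min hex hj
      have hform : ∀ j, 1 ≤ j → j < k → ∃ E₂, f j = C.fill (SExp.st E₂ g) := by
        intro j h1 hj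
        by_contra hcon
        exact hmin j hj ⟨h1, le_trans (le_of_lt hj) hk.2.1, hcon⟩
      have hk2 : 2 ≤ k := by
        rcases Nat.lt_or_ge k 2 with h | h
        · exfalso
          have h1k : 1 ≤ k := hk.1
          have : k = 1 := by omega
          exact hk.2.2 (this ▸ ⟨E', hY⟩)
        · exact h
      -- the step from f (k-1) to f k exits to E
      obtain ⟨E₂, hE₂⟩ := hform (k - 1) (by omega) (by omega)
      obtain ⟨l', hs'⟩ := hsteps (k - 1) (by omega)
      have hk1 : k - 1 + 1 = k := by omega
      rw [hk1] at hs'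
      rcases stepF (hE₂ ▸ hs') with ⟨E₃, _, hE₃⟩ | ⟨_, _, hexit⟩
      · exact absurd ⟨E₃, hE₃⟩ hk.2.2
      · -- f k = E, use the suffix path
        have hfk : f k = E := by rw [hexit, ← hX, hf0]
        obtain ⟨G, hG, hGt⟩ := IH (n - k) (by omega) E hc
          (fun i => f (k + i)) (by simpa using hfk)
          (fun i hi => hsteps (k + i) (by omega))
          (by show SExp.STerm (f (k + (n - k)))
              have : k + (n - k) = n := by omega
              rw [this]; exact hterm)
        exact ⟨G, hG, hGt⟩

theorem rtg_one_astep {X Y : SExp A} (h : Relation.ReflTransGen SExp.OneStep X Y) :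
    Relation.ReflTransGen SExp.AStep X Y :=
  Relation.ReflTransGen.mono (fun _ _ hs => ⟨none, hs⟩) _ _ h

theorem istep_astep {X : SExp A} {a : A} {Y : SExp A} (h : SExp.IStep X a Y) :
    Relation.ReflTransGen SExp.AStep X Y := by
  obtain ⟨M, h1, h2⟩ := h
  exact Relation.ReflTransGen.tail (rtg_one_astep h1) ⟨some a, h2⟩

theorem indrtg_astep {X Y : SExp A}
    (h : Relation.ReflTransGen (fun X Y => ∃ a : A, SExp.IStep X a Y) X Y) :
    Relation.ReflTransGen SExp.AStep X Y := by
  induction h with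
  | refl => exact Relation.ReflTransGen.refl
  | tail _ h2 ih => obtain ⟨a, ha⟩ := h2; exact Relation.ReflTransGen.trans ih (istep_astep ha)

theorem up_one_rtg_eq {f : StExp A} {M : SExp A}
    (h : Relation.ReflTransGen SExp.OneStep (SExp.up f) M) : M = SExp.up f := by
  rcases (Relation.ReflTransGen.cases_head h) with rfl | ⟨c, hc, _⟩
  · rfl
  · exact absurd hc no_none_up

/-- Claim N: a normed⁺ star body admits a transition followed by a body path
to a terminating expression. -/
theorem normedP_body {g : StExp A} (h : SExp.NormedP (SExp.up g)) :
    ∃ (a : A) (E'' G : SExp A), SExp.SStep (SExp.up g) (some a) E'' ∧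
      Relation.ReflTransGen Bo E'' G ∧ SExp.STerm G := by
  obtain ⟨F, tg, it⟩ := h
  obtain ⟨b, ⟨a, hab⟩, rest⟩ := (Relation.TransGen.head'_iff).mp tg
  obtain ⟨M, rtg1, hs⟩ := hab
  have hM : M = SExp.up g := up_one_rtg_eq rtg1
  subst hM
  obtain ⟨G₀, itg, itt⟩ := it
  have hreach : Relation.ReflTransGen SExp.AStep b G₀ :=
    Relation.ReflTransGen.trans (indrtg_astep rest) (rtg_one_astep itg)
  obtain ⟨m, f, hf0, hfm, hsteps⟩ := rtg_chain hreach
  obtain ⟨G, hG, hGt⟩ := bodyNormed m b (step_canonical hs) f hf0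
    (fun i hi => hsteps i hi) (hfm ▸ itt)
  exact ⟨a, b, G, hs, hG, hGt⟩

/-- Invariant maintained by the elimination procedure on charts derived from
`C1(e)`. -/
structure Inv (e : StExp A) (C : Chart (SExp A) (Option A)) : Prop where
  start_eq : C.start = SExp.flatUp e
  start_mem : C.start ∈ C.verts
  stepS : ∀ {x l y}, C.step x l y → SExp.SStep x l y
  stepMem : ∀ {x l y}, C.step x l y → x ∈ C.verts ∧ y ∈ C.verts
  termS : ∀ {x}, C.term x → SExp.STerm x
  vertsReach : C.verts ⊆ SReach e
  body : ∀ {x}, x ∈ C.verts → ∀ {l y}, SExp.SStep x l y → SExp.MStep x (l, 0) y →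
    C.step x l y
  entriesAll : ∀ {x}, x ∈ C.verts → (∃ l y, C.step x l y ∧ IsEntry x l y) →
    ∀ {l y}, IsEntry x l y → C.step x l y

/-- Remaining loop-entry transitions, as (vertex, level) pairs. -/
def Ent (C : Chart (SExp A) (Option A)) : Set (SExp A × ℕ) :=
  {p | p.1 ∈ C.verts ∧ ∃ a y, C.step p.1 (some a) y ∧ IsEntry p.1 (some a) y ∧
    SExp.MStep p.1 (some a, p.2) y ∧ 0 < p.2}

theorem ent_finite {e : StExp A} {C : Chart (SExp A) (Option A)} (hI : Inv e C) :
    (Ent C).Finite := by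
  refine Set.Finite.subset (((der_finite e).prod (Set.finite_Iic e.height))) ?_
  rintro ⟨v, m⟩ ⟨hv, a, y, hstep, hent, hM, hpos⟩
  have hd : v ∈ der e := reach_sub_der e (hI.vertsReach hv)
  exact ⟨hd, le_trans (markBound hM) (der_height e hd)⟩

theorem inv_canonical {e : StExp A} {C : Chart (SExp A) (Option A)} (hI : Inv e C)
    {x : SExp A} (hx : x ∈ C.verts) : SExp.Canonical x :=
  reach_canonical e (hI.vertsReach hx)

theorem elim_progress {e : StExp A} {C : Chart (SExp A) (Option A)} (hI : Inv e C)
    (hne : (Ent C).Nonempty) :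
    ∃ (C₂ : Chart (SExp A) (Option A)) (q : SExp A × ℕ), q ∈ Ent C ∧
      LEE.ElimStep C C₂ ∧ Inv e C₂ ∧ Ent C₂ ⊆ Ent C \ {q} := by
  classical
  -- choose an entry pair with minimal level
  obtain ⟨⟨v₀, n₀⟩, hv₀⟩ := hne
  have hSne : ∃ m, ∃ v, (v, m) ∈ Ent C := ⟨n₀, v₀, hv₀⟩
  set S : Set ℕ := {m | ∃ v, (v, m) ∈ Ent C} with hS
  have hSne' : S.Nonempty := ⟨n₀, v₀, hv₀⟩
  have hnS : sInf S ∈ S := Nat.sInf_mem hSne'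
  set n := sInf S with hn
  obtain ⟨v, hv⟩ := hnS
  have hv2 : v ∈ C.verts ∧ ∃ a y, C.step v (some a) y ∧ IsEntry v (some a) y ∧
      SExp.MStep v (some a, n) y ∧ 0 < n := hv
  obtain ⟨hvV, a₀, y₀, hstep₀, hent₀, hM₀, hnpos⟩ := hv2
  have hmin : ∀ m ∈ S, n ≤ m := fun m hm => Nat.sInf_le hm
  -- decompose the entry
  obtain ⟨Ctx, g, a₀', E₀, hX, hY₀, ha₀, hlev, hsg₀, hNg, hh₀⟩ :=
    entry_decomp hM₀ (inv_canonical hI hvV) hnpos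
  -- the set of loop-entry transitions at v
  set U : Set (SExp A × Option A × SExp A) :=
    {t | t.1 = v ∧ C.step v t.2.1 t.2.2 ∧ IsEntry v t.2.1 t.2.2} with hU
  have hUdec : ∀ l u, (v, l, u) ∈ U →
      ∃ a E', l = some a ∧ u = Ctx.fill (SExp.st E' g) ∧
        SExp.heightS E' ≤ g.height ∧ SExp.SStep (SExp.up g) (some a) E' := by
    rintro l u ⟨-, hstep, hsS, hnb⟩
    obtain ⟨m, hm⟩ := total hsS
    have hmpos : 0 < m := by
      rcases Nat.eq_zero_or_pos m with rfl | h
      · exact absurd hm hnb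
      · exact h
    obtain ⟨Ctx₂, g₂, a, E', hX₂, hY₂, hl, _, hsg, _, hh⟩ :=
      entry_decomp hm (inv_canonical hI hvV) hmpos
    have hfill : Ctx.fill (SExp.up (StExp.star g)) = Ctx₂.fill (SExp.up (StExp.star g₂)) := by
      rw [← hX, ← hX₂]
    obtain ⟨hC, hg⟩ := fill_up_inj hfill
    injection hg with hg
    subst hC; subst hg
    exact ⟨a, E', hl, hY₂, hh, hsg⟩
  have hvne : ∀ E₂ : SExp A, Ctx.fill (SExp.st E₂ g) ≠ v := by
    intro E₂ h
    rw [hX] at h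
    exact fill_st_ne_fill_up h
  -- characterization of generated vertices
  have hGV : ∀ w ∈ LEE.genVerts C v U, w = v ∨
      ∃ E₂, w = Ctx.fill (SExp.st E₂ g) ∧ SExp.heightS E₂ ≤ g.height ∧ w ∈ C.verts := by
    intro w hw
    rcases hw with rfl | ⟨u, ⟨l, hu⟩, hrtg⟩
    · exact Or.inl rfl
    · have hu' : ∃ E₂, u = Ctx.fill (SExp.st E₂ g) ∧ SExp.heightS E₂ ≤ g.height ∧
          u ∈ C.verts := by
        obtain ⟨a, E', -, rfl, hh, -⟩ := hUdec l u hu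
        exact ⟨E', rfl, hh, (hI.stepMem hu.2.1).2⟩
      clear hu
      induction hrtg with
      | refl => exact Or.inr hu'
      | @tail w₁ w₂ hr hstep ih =>
          rcases ih with rfl | ⟨E₂, rfl, hh₂, hmem₂⟩
          · exact absurd rfl hstep.2
          · obtain ⟨⟨l₂, hl₂⟩, -⟩ := hstep
            rcases stepF (hI.stepS hl₂) with ⟨E₃, hs₃, rfl⟩ | ⟨-, -, hexit⟩
            · exact Or.inr ⟨E₃, rfl, le_trans (hstep hs₃) hh₂, (hI.stepMem hl₂).2⟩
            · rw [hexit, ← hX]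
              exact Or.inl rfl
  -- all remaining transitions from interior vertices are body transitions
  have hBody : ∀ w, (∃ E₂, w = Ctx.fill (SExp.st E₂ g) ∧ SExp.heightS E₂ ≤ g.height) →
      w ∈ C.verts → ∀ l y, C.step w l y → Bo w y := by
    rintro w ⟨E₂, rfl, hh₂⟩ hmem l y hstep
    by_cases hb : SExp.MStep (Ctx.fill (SExp.st E₂ g)) (l, 0) y
    · exact ⟨l, hb⟩
    · exfalso
      obtain ⟨m, hm⟩ := total (hI.stepS hstep)
      have hmpos : 0 < m := by
        rcases Nat.eq_zero_or_pos m with rfl | h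
        · exact absurd hm hb
        · exact h
      obtain ⟨Ctx₂, g₂, a, E', hX₂, hY₂, hl, hm₂, hsg, hN₂, hh⟩ :=
        entry_decomp hm (inv_canonical hI hmem) hmpos
      subst hl
      have hmemS : m ∈ S :=
        ⟨Ctx.fill (SExp.st E₂ g), hmem, a, y, hstep, ⟨hI.stepS hstep, hb⟩, hm, hmpos⟩
      have h1 : SExp.heightS (SExp.up (StExp.star g₂)) ≤ SExp.heightS E₂ :=
        fill_st_up_height hX₂
      have h2 : m ≤ g.height := by
        rw [hm₂]
        exact le_trans h1 hh₂
      have := hmin m hmemS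
      omega
  -- build the returning body cycle witnessing (L1)
  obtain ⟨a₁, E₁, G, hs1, hboG, hGt⟩ := normedP_body hNg
  obtain ⟨m, fc, hfc0, hfcm, hfsteps⟩ := rtg_chain hboG
  set w : ℕ → SExp A := fun j => Ctx.fill (SExp.st (fc j) g) with hwdef
  have hw0 : w 0 = Ctx.fill (SExp.st E₁ g) := by rw [hwdef]; simp [hfc0]
  have hW0S : SExp.SStep v (some a₁) (w 0) := by
    rw [hX, hw0]
    exact liftS Ctx (SExp.SStep.upStar hs1)
  have hW0nb : ¬ SExp.MStep v (some a₁, 0) (w 0) := by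
    rw [hX, hw0]
    exact no_zero_mark_entry hNg
  have hW0C : C.step v (some a₁) (w 0) :=
    hI.entriesAll hvV ⟨_, _, hstep₀, hent₀⟩ ⟨hW0S, hW0nb⟩
  have hW0U : (v, some a₁, w 0) ∈ U := ⟨rfl, hW0C, hW0S, hW0nb⟩
  have hwstep : ∀ j, j < m → w j ∈ C.verts →
      ∃ l, C.step (w j) l (w (j + 1)) ∧ SExp.MStep (w j) (l, 0) (w (j + 1)) := by
    intro j hj hmem
    obtain ⟨l, hMj⟩ := hfsteps j hj
    have hM' : SExp.MStep (w j) (l, 0) (w (j + 1)) := liftM Ctx (SExp.MStep.stL hMj)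
    exact ⟨l, hI.body hmem (erase hM') hM', hM'⟩
  have hwmem : ∀ j, j ≤ m → w j ∈ C.verts := by
    intro j
    induction j with
    | zero => intro _; exact (hI.stepMem hW0C).2
    | succ j ih =>
        intro hj
        obtain ⟨l, hstep', -⟩ := hwstep j (by omega) (ih (by omega))
        exact (hI.stepMem hstep').2
  have hwexit : C.step (w m) none v := by
    have hGt' : SExp.STerm (fc m) := by rw [hfcm]; exact hGt
    have hM' : SExp.MStep (w m) (none, 0) (Ctx.fill (SExp.up (StExp.star g))) :=
      liftM Ctx (SExp.MStep.stOne hGt')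
    have hres := hI.body (hwmem m le_rfl) (erase hM') hM'
    rwa [← hX] at hres
  have hwgen : ∀ j, j ≤ m → w j ∈ LEE.genVerts C v U := by
    intro j hj
    refine Or.inr ⟨w 0, ⟨some a₁, hW0U⟩, ?_⟩
    refine chain_rtg w j ?_
    intro i hi
    obtain ⟨l2, hcs, -⟩ := hwstep i (by omega) (hwmem i (by omega))
    exact ⟨⟨l2, hcs⟩, hvne (fc i)⟩
  set L := m + 2 with hLdef
  have hLpos : 0 < L := by omega
  have hL1 : ∃ p, IsInfPathFrom (LEE.genSubchart C v U) p := by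
    refine ⟨fun i => if i % L = 0 then v else w (i % L - 1), by simp [LEE.genSubchart], ?_⟩
    intro i
    have hmod : (i + 1) % L = (i % L + 1) % L := by
      conv_lhs => rw [Nat.add_mod, Nat.mod_eq_of_lt (show 1 < L by omega)]
    have hr : i % L < L := Nat.mod_lt _ hLpos
    by_cases h0 : i % L = 0
    · have h1 : (i + 1) % L = 1 := by
        rw [hmod, h0, Nat.mod_eq_of_lt (by omega)]
      refine ⟨some a₁, Or.inl ⟨?_, ?_⟩⟩
      · simp [h0]
      · simp only [h1]
        norm_num
        exact hW0U
    · by_cases hlast : i % L = L - 1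
      · have h1 : (i + 1) % L = 0 := by
          rw [hmod, hlast]
          have : L - 1 + 1 = L := by omega
          rw [this, Nat.mod_self]
        refine ⟨none, Or.inr ⟨?_, ?_, ?_⟩⟩
        · simp only [if_neg h0, hlast]
          have : L - 1 - 1 = m := by omega
          rw [this]
          exact hwgen m le_rfl
        · simp only [if_neg h0, hlast]
          have : L - 1 - 1 = m := by omega
          rw [this]
          exact hvne (fc m)
        · simp only [if_neg h0, hlast, h1, if_pos rfl]
          have : L - 1 - 1 = m := by omega
          rw [this]
          exact hwexit
      · have hge1 : 1 ≤ i % L := by omega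
        have hlt : i % L + 1 < L := by omega
        have h1 : (i + 1) % L = i % L + 1 := by
          rw [hmod, Nat.mod_eq_of_lt hlt]
        have hne1 : ¬ (i + 1) % L = 0 := by omega
        obtain ⟨l', hstep', -⟩ :=
          hwstep (i % L - 1) (by omega) (hwmem (i % L - 1) (by omega))
        refine ⟨l', Or.inr ⟨?_, ?_, ?_⟩⟩
        · simp only [if_neg h0]
          exact hwgen (i % L - 1) (by omega)
        · simp only [if_neg h0]
          exact hvne _
        · simp only [if_neg h0, if_neg hne1, h1]
          have : i % L + 1 - 1 = i % L - 1 + 1 := by omega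
          rw [this]
          exact hstep'
  have hL2 : ∀ p, IsInfPathFrom (LEE.genSubchart C v U) p → ∃ k, 0 < k ∧ p k = v := by
    intro p hp
    obtain ⟨hp0, hpstep⟩ := hp
    by_contra hcon
    push_neg at hcon
    have hcon' : ∀ k, 0 < k → p k ≠ v := fun k hk => (hcon k) hk
    obtain ⟨l₁, hstep1⟩ := hpstep 0
    have hU1 : (v, l₁, p 1) ∈ U := by
      rcases hstep1 with ⟨-, hU1⟩ | ⟨-, hne0, -⟩
      · exact hU1
      · exact absurd hp0 hne0
    have hQ : ∀ i, 1 ≤ i →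
        (∃ E₂, p i = Ctx.fill (SExp.st E₂ g) ∧ SExp.heightS E₂ ≤ g.height) ∧
        p i ∈ C.verts := by
      intro i
      induction i with
      | zero => omega
      | succ i ih =>
          intro _
          by_cases hi : 1 ≤ i
          · obtain ⟨⟨E₂, hfor, hh₂⟩, hmem⟩ := ih hi
            obtain ⟨l', hstep'⟩ := hpstep i
            rcases hstep' with ⟨hiv, -⟩ | ⟨-, -, hC'⟩
            · exact absurd hiv (hcon' i hi)
            · rw [hfor] at hC'
              rcases stepF (hI.stepS hC') with ⟨E₃, hs₃, hfor₃⟩ | ⟨-, -, hexit⟩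
              · exact ⟨⟨E₃, hfor₃, le_trans (hstep hs₃) hh₂⟩, (hI.stepMem hC').2⟩
              · rw [← hX] at hexit
                exact absurd hexit (hcon' (i + 1) (by omega))
          · have hi0 : i = 0 := by omega
            subst hi0
            obtain ⟨a, E', -, hfor, hh, -⟩ := hUdec l₁ (p 1) hU1
            exact ⟨⟨E', hfor, hh⟩, (hI.stepMem hU1.2.1).2⟩
    have hbo : ∀ i, Bo (p (i + 1)) (p (i + 2)) := by
      intro i
      obtain ⟨l', hstep'⟩ := hpstep (i + 1)
      rcases hstep' with ⟨hiv, -⟩ | ⟨-, -, hC'⟩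
      · exact absurd hiv (hcon' (i + 1) (by omega))
      · exact hBody (p (i + 1)) (hQ (i + 1) (by omega)).1 (hQ (i + 1) (by omega)).2 l'
          (p (i + 2)) hC'
    exact no_inf_of_acc
      (accBo e (reach_sub_der e (hI.vertsReach (hQ 1 le_rfl).2)))
      (fun i => p (i + 1)) rfl hbo
  have hL3 : ∀ x ∈ (LEE.genSubchart C v U).verts, (LEE.genSubchart C v U).term x →
      x = v := by
    intro x hx hterm
    obtain ⟨hx', htermC⟩ := hterm
    rcases hGV x hx' with rfl | ⟨E₂, rfl, -, -⟩
    · rfl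
    · exact absurd (hI.termS htermC) sterm_fill_st
  have hLS : LEE.IsLoopSubchart C v U := by
    refine ⟨hvV, ⟨(v, some a₀, y₀), rfl, hstep₀, hent₀⟩, ?_, hL1, hL2, hL3⟩
    rintro ⟨x, l, y⟩ ⟨h1, h2, -⟩
    exact ⟨h1, by rw [h1]; exact h2⟩
  -- the eliminated chart
  set R : Set (SExp A) :=
    {x | Relation.ReflTransGen (fun x y => ∃ l, C.step x l y ∧ (x, l, y) ∉ U)
      C.start x} with hRdef
  have hstep₂ : ∀ x l y, (LEE.elim C U).step x l y ↔
      ((C.step x l y ∧ (x, l, y) ∉ U) ∧ x ∈ R ∧ y ∈ R) := fun _ _ _ => Iff.rfl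
  have hverts₂ : (LEE.elim C U).verts = C.verts ∩ R := rfl
  have hterm₂ : ∀ x, (LEE.elim C U).term x ↔ (C.term x ∧ x ∈ R) := fun _ => Iff.rfl
  have hInv₂ : Inv e (LEE.elim C U) := by
    refine ⟨hI.start_eq, ⟨hI.start_mem, Relation.ReflTransGen.refl⟩, ?_, ?_, ?_, ?_, ?_, ?_⟩
    · intro x l y h; exact hI.stepS ((hstep₂ x l y).mp h).1.1
    · intro x l y h
      obtain ⟨⟨hC', hnU⟩, hxR, hyR⟩ := (hstep₂ x l y).mp h
      exact ⟨⟨(hI.stepMem hC').1, hxR⟩, ⟨(hI.stepMem hC').2, hyR⟩⟩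
    · intro x h; exact hI.termS ((hterm₂ x).mp h).1
    · intro x hx; exact hI.vertsReach hx.1
    · intro x hx l y hS hM
      have hCxy : C.step x l y := hI.body hx.1 hS hM
      have hnU : (x, l, y) ∉ U := by
        rintro ⟨hx1, -, hent⟩
        exact hent.2 (hx1 ▸ hM)
      exact (hstep₂ x l y).mpr
        ⟨⟨hCxy, hnU⟩, hx.2, Relation.ReflTransGen.tail hx.2 ⟨l, hCxy, hnU⟩⟩
    · intro x hx hex l y hent
      obtain ⟨l₁, y₁, hstep₁', hent₁'⟩ := hex
      obtain ⟨⟨hC₁, hnU₁⟩, hxR, hy₁R⟩ := (hstep₂ _ _ _).mp hstep₁'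
      have hxv : x ≠ v := by
        rintro rfl
        exact hnU₁ ⟨rfl, hC₁, hent₁'⟩
      have hCxy : C.step x l y := hI.entriesAll hx.1 ⟨l₁, y₁, hC₁, hent₁'⟩ hent
      have hnU : (x, l, y) ∉ U := fun hU' => hxv hU'.1
      exact (hstep₂ _ _ _).mpr
        ⟨⟨hCxy, hnU⟩, hxR, Relation.ReflTransGen.tail hxR ⟨l, hCxy, hnU⟩⟩
  have hEntSub : Ent (LEE.elim C U) ⊆ Ent C \ {(v, n)} := by
    rintro ⟨x, m'⟩ hmem'
    have hmem2 : x ∈ (LEE.elim C U).verts ∧ ∃ a y, (LEE.elim C U).step x (some a) y ∧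
        IsEntry x (some a) y ∧ SExp.MStep x (some a, m') y ∧ 0 < m' := hmem'
    obtain ⟨hx, a, y, hstep', hent', hM', hpos'⟩ := hmem2
    obtain ⟨⟨hC', hnU⟩, hxR, hyR⟩ := (hstep₂ _ _ _).mp hstep'
    have hxv : x ≠ v := by
      rintro rfl
      exact hnU ⟨rfl, hC', hent'⟩
    constructor
    · exact ⟨hx.1, a, y, hC', hent', hM', hpos'⟩
    · simp only [Set.mem_singleton_iff]
      intro hEq
      exact hxv (congrArg Prod.fst hEq)
  exact ⟨LEE.elim C U, (v, n), ⟨hvV, a₀, y₀, hstep₀, hent₀, hM₀, hnpos⟩,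
    ⟨v, U, hLS, rfl⟩, hInv₂, hEntSub⟩

theorem no_inf_path_of_no_ent {e : StExp A} {C : Chart (SExp A) (Option A)}
    (hI : Inv e C) (hE : ¬ (Ent C).Nonempty) : ¬ LEE.HasInfPath C := by
  rintro ⟨p, hp0, hsteps⟩
  have hmem : ∀ i, p i ∈ C.verts := by
    intro i
    induction i with
    | zero => exact hp0
    | succ i ih =>
        obtain ⟨l, hl⟩ := hsteps i
        exact (hI.stepMem hl).2
  have hbo : ∀ i, Bo (p i) (p (i + 1)) := by
    intro i
    obtain ⟨l, hl⟩ := hsteps i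
    by_cases hb : SExp.MStep (p i) (l, 0) (p (i + 1))
    · exact ⟨l, hb⟩
    · exfalso
      obtain ⟨m, hm⟩ := total (hI.stepS hl)
      have hmpos : 0 < m := by
        rcases Nat.eq_zero_or_pos m with rfl | h
        · exact absurd hm hb
        · exact h
      obtain ⟨Ctx₂, g₂, a, E', -, -, hlbl, -, -, -, -⟩ :=
        entry_decomp hm (inv_canonical hI (hmem i)) hmpos
      subst hlbl
      exact hE ⟨(p i, m), hmem i, a, p (i + 1), hl, ⟨hI.stepS hl, hb⟩, hm, hmpos⟩
  exact no_inf_of_acc (accBo e (reach_sub_der e (hI.vertsReach (hmem 0)))) p rfl hbo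

theorem elim_all {e : StExp A} : ∀ (k : ℕ) (C : Chart (SExp A) (Option A)),
    Inv e C → (Ent C).ncard ≤ k →
    ∃ C₂, Relation.ReflTransGen LEE.ElimStep C C₂ ∧ ¬ LEE.HasInfPath C₂ := by
  intro k
  induction k with
  | zero =>
      intro C hI hcard
      refine ⟨C, Relation.ReflTransGen.refl, no_inf_path_of_no_ent hI ?_⟩
      intro hne
      have : (Ent C).ncard = 0 := le_antisymm hcard (Nat.zero_le _)
      rw [Set.ncard_eq_zero (ent_finite hI)] at this
      exact Set.not_nonempty_empty (this ▸ hne)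
  | succ k ih =>
      intro C hI hcard
      by_cases hne : (Ent C).Nonempty
      · obtain ⟨C₂, q, hq, hstep, hI₂, hsub⟩ := elim_progress hI hne
        have hcard₂ : (Ent C₂).ncard ≤ k := by
          have h1 : (Ent C₂).ncard ≤ (Ent C \ {q}).ncard :=
            Set.ncard_le_ncard hsub ((ent_finite hI).diff)
          have h2 : (Ent C \ {q}).ncard < (Ent C).ncard :=
            Set.ncard_diff_singleton_lt_of_mem hq (ent_finite hI)
          omega
        obtain ⟨C₃, hrtg, hno⟩ := ih C₂ hI₂ hcard₂
        exact ⟨C₃, Relation.ReflTransGen.head hstep hrtg, hno⟩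
      · exact ⟨C, Relation.ReflTransGen.refl, no_inf_path_of_no_ent hI hne⟩

theorem inv_init (e : StExp A) : Inv e (oneChartInt e) := by
  refine ⟨rfl, Relation.ReflTransGen.refl, ?_, ?_, ?_, ?_, ?_, ?_⟩
  · intro x l y h; exact h.2
  · intro x l y h
    exact ⟨h.1, Relation.ReflTransGen.tail h.1 ⟨l, h.2⟩⟩
  · intro x h; exact h.2
  · intro x hx; exact hx
  · intro x hx l y hS _
    exact ⟨hx, hS⟩
  · intro x hx _ l y hent
    exact ⟨hx, hent.1⟩

end LEEProof







/-- For every star expression `e`, the 1-chart interpretation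
`C1(e)` satisfies the loop existence and elimination property LEE. -/
theorem onechart_satisfies_LEE {A : Type u} (e : StExp A) :
    LEE.SatisfiesLEE (oneChartInt e) := by
  obtain ⟨C₂, hrtg, hno⟩ :=
    LEEProof.elim_all (LEEProof.Ent (oneChartInt e)).ncard (oneChartInt e)
      (LEEProof.inv_init e) le_rfl
  exact ⟨C₂, hrtg, hno⟩
end
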